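/- Let λ : (0,S) → ℝ be a C¹ function satisfying the Riccati differential inequality -λ'(s) ≥ (n-m)κ(s) + λ(s)²/(n-m) for all s ∈ (0,S), where n - m > 0 and κ : [0,∞) → ℝ is continuous, and suppose limsup_{s→0⁺} s·λ(s) ≤ n - m. Let m_κ(s) := (n-m)·𝔰_κ'(s)/𝔰_κ(s), where 𝔰_κ solves 𝔰'' + κ𝔰 = 0 with 𝔰(0)=0, 𝔰'(0)=1, and let δ_κ be the first positive zero of 𝔰_κ. Then λ(s) ≤ m_κ(s) for all s ∈ (0, min(S, δ_κ)). -/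

import Mathlib

open Set Filter Topology

set_option maxHeartbeats 2000000 in
/-- Riccati comparison: If λ is C¹ on (0,S), satisfies
-λ'(s) ≥ (n-m)κ(s) + λ(s)²/(n-m) on (0,S) with limsup_{s→0⁺} s·λ(s) ≤ n-m,
then λ(s) ≤ m_κ(s) = (n-m)𝔰_κ'(s)/𝔰_κ(s) for all s ∈ (0, min(S, δ_κ)). -/
theorem riccati_comparison
    (n m S : ℝ) (hnm : 0 < n - m) (hS : 0 < S)
    (κ lam lamd 𝔰 𝔰d : ℝ → ℝ)
    (hκ : ContinuousOn κ (Ici 0))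
    (hlam : ∀ s ∈ Ioo 0 S, HasDerivAt lam (lamd s) s)
    (hlamd : ContinuousOn lamd (Ioo 0 S))
    (hRic : ∀ s ∈ Ioo 0 S, (n - m) * κ s + (lam s) ^ 2 / (n - m) ≤ -lamd s)
    (hlimsup : limsup (fun s => s * lam s) (nhdsWithin 0 (Ioi 0)) ≤ n - m)
    (h𝔰 : ∀ t, HasDerivAt 𝔰 (𝔰d t) t)
    (h𝔰d : ∀ t, HasDerivAt 𝔰d (-(κ t * 𝔰 t)) t)
    (h0 : 𝔰 0 = 0) (h0' : 𝔰d 0 = 1) :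
    ∀ s : ℝ, 0 < s → s < S → (∀ u : ℝ, 0 < u → u ≤ s → 𝔰 u ≠ 0) →
      lam s ≤ (n - m) * (𝔰d s / 𝔰 s) := by
  intro s hs hsS h𝔰ne
  obtain ⟨N, hNeq⟩ : ∃ N : ℝ, N = n - m := ⟨_, rfl⟩
  rw [← hNeq] at hnm hRic ⊢
  have hNe : N ≠ 0 := ne_of_gt hnm
  -- multiplied form of the Riccati inequality
  have hRic' : ∀ x ∈ Ioo 0 S, N ^ 2 * κ x + lam x ^ 2 ≤ -(N * lamd x) := by
    intro x hx
    have h := mul_le_mul_of_nonneg_left (hRic x hx) hnm.le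
    calc N ^ 2 * κ x + lam x ^ 2 = N * (N * κ x + lam x ^ 2 / N) := by
          field_simp
      _ ≤ N * (-lamd x) := h
      _ = -(N * lamd x) := by ring
  -- the comparison function g and its derivative
  set g : ℝ → ℝ := fun t => 𝔰 t ^ 2 * lam t - N * (𝔰 t * 𝔰d t) with hgdef
  set G : ℝ → ℝ := fun x =>
    2 * 𝔰 x * 𝔰d x * lam x + 𝔰 x ^ 2 * lamd x - N * 𝔰d x ^ 2 + N * κ x * 𝔰 x ^ 2 with hGdef
  have hgderiv : ∀ x ∈ Ioo 0 S, HasDerivAt g (G x) x := by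
    intro x hx
    have h1 := ((h𝔰 x).pow 2).mul (hlam x hx)
    have h2 := ((h𝔰 x).mul (h𝔰d x)).const_mul N
    refine (h1.sub h2).congr_deriv ?_
    simp [hGdef]
    ring
  have hGle : ∀ x ∈ Ioo 0 S, G x ≤ 0 := by
    intro x hx
    have h2 := hRic' x hx
    have h3 := mul_le_mul_of_nonneg_left h2 (sq_nonneg (𝔰 x))
    have h4 : N * G x ≤ 0 := by
      simp only [hGdef]
      nlinarith [sq_nonneg (𝔰 x * lam x - N * 𝔰d x)]
    nlinarith [h4, hnm]
  -- g is nonincreasing towards s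
  have key : ∀ t, 0 < t → t ≤ s → g s ≤ g t := by
    intro t ht hts
    rcases eq_or_lt_of_le hts with rfl | hlt
    · exact le_refl _
    have hsub : Icc t s ⊆ Ioo 0 S := fun x hx => ⟨lt_of_lt_of_le ht hx.1, lt_of_le_of_lt hx.2 hsS⟩
    have hanti : AntitoneOn g (Icc t s) := by
      apply antitoneOn_of_deriv_nonpos (convex_Icc t s)
      · exact fun x hx => ((hgderiv x (hsub hx)).continuousAt).continuousWithinAt
      · intro x hx
        rw [interior_Icc] at hx
        exact ((hgderiv x (hsub (Ioo_subset_Icc_self hx))).differentiableAt).differentiableWithinAt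
      · intro x hx
        rw [interior_Icc] at hx
        rw [(hgderiv x (hsub (Ioo_subset_Icc_self hx))).deriv]
        exact hGle x (hsub (Ioo_subset_Icc_self hx))
    exact hanti ⟨le_refl t, hts⟩ ⟨hts, le_refl s⟩ hts
  -- main claim: g s ≤ 0
  have hgs : g s ≤ 0 := by
    by_contra hcon
    push_neg at hcon
    obtain ⟨ε, hεpos, hεle⟩ : ∃ ε : ℝ, 0 < ε ∧ ∀ t, 0 < t → t ≤ s → ε ≤ g t :=
      ⟨g s, hcon, key⟩
    clear hcon
    -- behavior near zero
    obtain ⟨δ0, hδ0pos, hδ0⟩ : ∃ δ0 > 0, ∀ t, 0 < t → t < δ0 →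
        (0 < 𝔰 t ∧ 𝔰 t < 2 * t ∧ -(ε/2) < N * (𝔰 t * 𝔰d t)) := by
      have hs0 := hasDerivAt_iff_tendsto_slope.mp (h𝔰 0)
      rw [h0'] at hs0
      have hEv1 : ∀ᶠ t in 𝓝[≠] (0:ℝ), slope 𝔰 0 t ∈ Ioo (0:ℝ) 2 :=
        hs0 (Ioo_mem_nhds one_pos one_lt_two)
      have hEv1' : ∀ᶠ t in 𝓝[>] (0:ℝ), slope 𝔰 0 t ∈ Ioo (0:ℝ) 2 :=
        hEv1.filter_mono (nhdsWithin_mono 0 (fun x hx => ne_of_gt hx))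
      have hcontm : Tendsto (fun t => N * (𝔰 t * 𝔰d t)) (𝓝 0) (𝓝 0) := by
        have := (((h𝔰 0).continuousAt.mul (h𝔰d 0).continuousAt).const_mul N)
        simpa [h0, ContinuousAt] using this
      have hEv2 : ∀ᶠ t in 𝓝 (0:ℝ), -(ε/2) < N * (𝔰 t * 𝔰d t) :=
        hcontm.eventually (eventually_gt_nhds (by linarith))
      have hEv : ∀ᶠ t in 𝓝[>] (0:ℝ),
          slope 𝔰 0 t ∈ Ioo (0:ℝ) 2 ∧ -(ε/2) < N * (𝔰 t * 𝔰d t) :=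
        hEv1'.and (hEv2.filter_mono nhdsWithin_le_nhds)
      rcases Metric.mem_nhdsWithin_iff.mp hEv with ⟨δ, hδ, hball⟩
      refine ⟨δ, hδ, fun t ht htδ => ?_⟩
      have htmem : t ∈ Metric.ball (0:ℝ) δ ∩ Ioi 0 := by
        constructor
        · simp [Real.dist_eq, abs_of_pos ht, htδ]
        · exact ht
      obtain ⟨hP12, hP3⟩ := hball htmem
      have hslope : slope 𝔰 0 t = 𝔰 t / t := by
        simp [slope_def_field, h0]
      rw [hslope] at hP12
      obtain ⟨hP1, hP2⟩ := hP12
      refine ⟨?_, ?_, hP3⟩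
      · exact (div_pos_iff.mp hP1).resolve_right (fun h => absurd ht (not_lt.mpr h.2.le)) |>.1
      · have := (div_lt_iff₀ ht).mp hP2
        linarith
    obtain ⟨δ1, hδ1pos, hδ1s, hδ1δ0⟩ :
        ∃ δ1 : ℝ, 0 < δ1 ∧ δ1 ≤ s ∧ δ1 < δ0 :=
      ⟨min (δ0/2) s, lt_min (by linarith) hs, min_le_right _ _,
        lt_of_le_of_lt (min_le_left _ _) (by linarith)⟩
    -- lower bound on lam near 0
    have hlow : ∀ t, 0 < t → t ≤ δ1 → 0 < lam t ∧ ε/8 ≤ lam t * t^2 := by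
      intro t ht htδ
      have hts : t ≤ s := le_trans htδ hδ1s
      obtain ⟨hb1, hb2, hb3⟩ := hδ0 t ht (lt_of_le_of_lt htδ hδ1δ0)
      have hgt : ε ≤ g t := hεle t ht hts
      simp only [hgdef] at hgt
      have hmain : ε/2 ≤ 𝔰 t ^ 2 * lam t := by linarith
      have hsq : 𝔰 t ^ 2 ≤ 4 * t^2 := by nlinarith
      have hs2pos : 0 < 𝔰 t ^ 2 := by positivity
      have hlampos : 0 < lam t := by nlinarith
      constructor
      · exact hlampos
      · nlinarith [mul_le_mul_of_nonneg_left hsq hlampos.le]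
    -- bound on κ
    obtain ⟨K, hK0, hκK⟩ : ∃ K : ℝ, 0 ≤ K ∧ ∀ t ∈ Icc (0:ℝ) s, -K ≤ κ t := by
      obtain ⟨C, hC⟩ := (isCompact_Icc : IsCompact (Icc (0:ℝ) s)).exists_bound_of_continuousOn
        (hκ.mono (fun x hx => hx.1))
      refine ⟨max C 0, le_max_right _ _, fun t htI => ?_⟩
      have h1 : |κ t| ≤ max C 0 := le_trans (hC t htI) (le_max_left _ _)
      linarith [(abs_le.mp h1).1]
    obtain ⟨M, hM0, hM2⟩ : ∃ M : ℝ, 0 < M ∧ 2*N^2*K ≤ M^2 := by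
      refine ⟨Real.sqrt (2*N^2*K) + 1, by positivity, ?_⟩
      have h1 := Real.sq_sqrt (show (0:ℝ) ≤ 2*N^2*K by positivity)
      have h2 := Real.sqrt_nonneg (2*N^2*K)
      nlinarith
    obtain ⟨δ2, hδ2pos, hδ2δ1, hδ2M⟩ :
        ∃ δ2 : ℝ, 0 < δ2 ∧ δ2 ≤ δ1 ∧ ∀ t, 0 < t → t ≤ δ2 → M * t^2 ≤ ε/8 := by
      refine ⟨min δ1 (min 1 ((ε/8)/M)), lt_min hδ1pos (lt_min one_pos (by positivity)),
        min_le_left _ _, fun t ht htδ => ?_⟩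
      have h1 : t ≤ 1 := le_trans htδ (le_trans (min_le_right _ _) (min_le_left _ _))
      have h2 : t ≤ (ε/8)/M := le_trans htδ (le_trans (min_le_right _ _) (min_le_right _ _))
      have h3 : t^2 ≤ (ε/8)/M := by nlinarith
      calc M * t^2 ≤ M * ((ε/8)/M) := mul_le_mul_of_nonneg_left h3 hM0.le
        _ = ε/8 := by field_simp; try ring
    -- M is a lower bound for lam on (0, δ2]
    have hMlam : ∀ t, 0 < t → t ≤ δ2 → M ≤ lam t := by
      intro t ht htδ
      have h4 := hδ2M t ht htδ
      have h5 := (hlow t ht (le_trans htδ hδ2δ1)).2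
      have ht2 : 0 < t^2 := by positivity
      nlinarith
    -- the quantitative Riccati bound on (0, δ2]
    have hlamd2 : ∀ t, 0 < t → t ≤ δ2 → lam t ^ 2 ≤ 2*N*(-lamd t) := by
      intro t ht htδ
      have htS : t ∈ Ioo 0 S := ⟨ht, lt_of_le_of_lt (le_trans htδ (le_trans hδ2δ1 hδ1s)) hsS⟩
      have hR := hRic' t htS
      have hκt := hκK t ⟨ht.le, le_trans htδ (le_trans hδ2δ1 hδ1s)⟩
      have hκt' : N^2 * (-K) ≤ N^2 * κ t := mul_le_mul_of_nonneg_left hκt (sq_nonneg N)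
      have hMle := hMlam t ht htδ
      have hl2 : M^2 ≤ lam t ^ 2 := by nlinarith
      linarith
    -- the function ψ and its monotonicity
    set ψ : ℝ → ℝ := fun t => t - 2*N*(lam t)⁻¹ with hψdef
    have hψderiv : ∀ x, 0 < x → x ≤ δ2 →
        HasDerivAt ψ (1 - 2*N*(-(lamd x)/(lam x)^2)) x := by
      intro x hx hxδ
      have hxS : x ∈ Ioo 0 S := ⟨hx, lt_of_le_of_lt (le_trans hxδ (le_trans hδ2δ1 hδ1s)) hsS⟩
      have hne : lam x ≠ 0 := ne_of_gt (lt_of_lt_of_le hM0 (hMlam x hx hxδ))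
      exact (hasDerivAt_id x).sub (((hlam x hxS).inv hne).const_mul (2*N))
    have hψd_nonpos : ∀ x, 0 < x → x ≤ δ2 → 1 - 2*N*(-(lamd x)/(lam x)^2) ≤ 0 := by
      intro x hx hxδ
      have hk := hlamd2 x hx hxδ
      have hpos : 0 < lam x ^ 2 := by
        have := lt_of_lt_of_le hM0 (hMlam x hx hxδ)
        positivity
      have h1 : (1:ℝ) ≤ (2*N*(-lamd x))/lam x ^2 := (one_le_div hpos).mpr hk
      have heq : 2*N*(-(lamd x)/lam x^2) = (2*N*(-lamd x))/lam x^2 := by ring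
      linarith [heq ▸ h1]
    have hψanti : ∀ a b, 0 < a → a ≤ b → b ≤ δ2 → ψ b ≤ ψ a := by
      intro a b ha hab hbδ
      have hsub : ∀ x ∈ Icc a b, 0 < x ∧ x ≤ δ2 :=
        fun x hx => ⟨lt_of_lt_of_le ha hx.1, le_trans hx.2 hbδ⟩
      have hanti : AntitoneOn ψ (Icc a b) := by
        apply antitoneOn_of_deriv_nonpos (convex_Icc a b)
        · intro x hx
          exact ((hψderiv x (hsub x hx).1 (hsub x hx).2).continuousAt).continuousWithinAt
        · intro x hx
          rw [interior_Icc] at hx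
          have h := hsub x (Ioo_subset_Icc_self hx)
          exact ((hψderiv x h.1 h.2).differentiableAt).differentiableWithinAt
        · intro x hx
          rw [interior_Icc] at hx
          have h := hsub x (Ioo_subset_Icc_self hx)
          rw [(hψderiv x h.1 h.2).deriv]
          exact hψd_nonpos x h.1 h.2
      exact hanti ⟨le_refl a, hab⟩ ⟨hab, le_refl b⟩ hab
    -- final contradiction at t₀
    obtain ⟨t₀, ht₀pos, ht₀δ2, ht₀N⟩ :
        ∃ t₀ : ℝ, 0 < t₀ ∧ t₀ ≤ δ2 ∧ 4*N*t₀ ≤ ε/8 := by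
      refine ⟨min δ2 ((ε/8)/(4*N)), lt_min hδ2pos (by positivity), min_le_left _ _, ?_⟩
      have h6 : min δ2 ((ε/8)/(4*N)) ≤ (ε/8)/(4*N) := min_le_right _ _
      calc 4*N*(min δ2 ((ε/8)/(4*N))) ≤ 4*N*((ε/8)/(4*N)) :=
            mul_le_mul_of_nonneg_left h6 (by linarith)
        _ = ε/8 := by field_simp; try ring
    have hlam₀ := hMlam t₀ ht₀pos ht₀δ2
    have hlampos₀ : 0 < lam t₀ := lt_of_lt_of_le hM0 hlam₀
    have hlow₀ := (hlow t₀ ht₀pos (le_trans ht₀δ2 hδ2δ1)).2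
    have hψt₀ : ψ t₀ ≤ 0 := by
      by_contra hψpos
      push_neg at hψpos
      have hapos : 0 < min t₀ (ψ t₀) := lt_min ht₀pos hψpos
      have hat : min t₀ (ψ t₀) ≤ t₀ := min_le_left _ _
      have h1 := hψanti (min t₀ (ψ t₀)) t₀ hapos hat ht₀δ2
      have hlama : 0 < lam (min t₀ (ψ t₀)) :=
        lt_of_lt_of_le hM0 (hMlam _ hapos (le_trans hat ht₀δ2))
      have h2 : ψ (min t₀ (ψ t₀)) < min t₀ (ψ t₀) := by
        simp only [hψdef]
        have : 0 < 2*N*(lam (min t₀ (ψ t₀)))⁻¹ := by positivity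
        linarith
      have h3 : min t₀ (ψ t₀) ≤ ψ t₀ := min_le_right _ _
      linarith
    have h4 : t₀ ≤ 2*N*(lam t₀)⁻¹ := by
      simp only [hψdef] at hψt₀; linarith
    have h5 : lam t₀ * t₀ ≤ 2*N := by
      calc lam t₀ * t₀ ≤ lam t₀ * (2*N*(lam t₀)⁻¹) :=
            mul_le_mul_of_nonneg_left h4 hlampos₀.le
        _ = 2*N := by field_simp; try ring
    have h7 : lam t₀ * t₀^2 ≤ 2*N*t₀ := by nlinarith
    nlinarith
  -- conclude
  have h𝔰s : 𝔰 s ≠ 0 := h𝔰ne s hs (le_refl s)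
  have h𝔰s2 : 0 < 𝔰 s ^ 2 := by positivity
  rw [show N * (𝔰d s / 𝔰 s) = N * (𝔰 s * 𝔰d s) / 𝔰 s ^ 2 by field_simp]
  rw [le_div_iff₀ h𝔰s2]
  simp only [hgdef] at hgs
  nlinarith [hgs]
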